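/- Let ψ : U → ℝⁿ be a C^∞ map on an open set U ⊆ ℝᵐ with Dψ(u₀) injective at a point u₀ ∈ U, and let η ∈ ℝⁿ satisfy Dψ(u₀)ᵀη = 0. For α ∈ ℝ let H_α denote the Hessian at u₀ of the function u ↦ ½‖(ψ(u₀) + αη) − ψ(u)‖². Then H_α = Dψ(u₀)ᵀDψ(u₀) − αW, where W is the symmetric m×m matrix with ⟨Wv, w⟩ = ⟨η, D²ψ(u₀)[v, w]⟩, and the set {α ∈ ℝ : H_α is not invertible} is finite, containing at most m elements. -/

import Mathlib

open scoped RealInnerProductSpace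

noncomputable section

open ContinuousLinearMap Polynomial

/-- The real inner product as an `ℝ`-bilinear continuous map. -/
def realInnerCLM {n : ℕ} :
    EuclideanSpace ℝ (Fin n) →L[ℝ] EuclideanSpace ℝ (Fin n) →L[ℝ] ℝ := innerSL ℝ

@[simp] lemma realInnerCLM_apply {n : ℕ} (x y : EuclideanSpace ℝ (Fin n)) :
    realInnerCLM x y = ⟪x, y⟫ := rfl

/-- Hessian of `u ↦ ½‖a − ψ u‖²` at an interior point. -/
lemma hessian_dist_formula {m n : ℕ}
    (U : Set (EuclideanSpace ℝ (Fin m))) (hU : IsOpen U)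
    (ψ : EuclideanSpace ℝ (Fin m) → EuclideanSpace ℝ (Fin n))
    (hψ : ContDiffOn ℝ (⊤ : ℕ∞) ψ U)
    (u₀ : EuclideanSpace ℝ (Fin m)) (hu₀ : u₀ ∈ U)
    (a : EuclideanSpace ℝ (Fin n)) (v w : EuclideanSpace ℝ (Fin m)) :
    fderiv ℝ (fderiv ℝ (fun u => (1 / 2 : ℝ) * ‖a - ψ u‖ ^ 2)) u₀ v w =
      ⟪fderiv ℝ ψ u₀ v, fderiv ℝ ψ u₀ w⟫
        + ⟪ψ u₀ - a, fderiv ℝ (fderiv ℝ ψ) u₀ v w⟫ := by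
  have hψc := hψ.contDiffAt (hU.mem_nhds hu₀)
  have hD : HasFDerivAt (fderiv ℝ ψ) (fderiv ℝ (fderiv ℝ ψ) u₀) u₀ :=
    ((hψc.fderiv_right (m := (⊤ : ℕ∞)) (by norm_cast)).differentiableAt
      (by simp)).hasFDerivAt
  set G : EuclideanSpace ℝ (Fin m) → (EuclideanSpace ℝ (Fin m) →L[ℝ] ℝ) :=
    fun u => (realInnerCLM (ψ u - a)).comp (fderiv ℝ ψ u) with hG_def
  have key : ∀ u, DifferentiableAt ℝ ψ u →
      HasFDerivAt (fun u' => (1 / 2 : ℝ) * ‖a - ψ u'‖ ^ 2) (G u) u := by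
    intro u hu
    have h1 : HasFDerivAt (fun u' => a - ψ u') (-(fderiv ℝ ψ u)) u :=
      hu.hasFDerivAt.const_sub a
    have h2 := (h1.inner ℝ h1).const_mul (1 / 2 : ℝ)
    have h3 : HasFDerivAt (fun u' => (1 / 2 : ℝ) * ‖a - ψ u'‖ ^ 2)
        ((1 / 2 : ℝ) • ((fderivInnerCLM ℝ (a - ψ u, a - ψ u)).comp
          ((-(fderiv ℝ ψ u)).prod (-(fderiv ℝ ψ u))))) u := by
      simpa only [real_inner_self_eq_norm_sq] using h2
    have hEq : ((1 / 2 : ℝ) • ((fderivInnerCLM ℝ (a - ψ u, a - ψ u)).comp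
        ((-(fderiv ℝ ψ u)).prod (-(fderiv ℝ ψ u))))) = G u := by
      ext z
      simp only [hG_def, ContinuousLinearMap.smul_apply, ContinuousLinearMap.comp_apply,
        ContinuousLinearMap.prod_apply, ContinuousLinearMap.neg_apply, fderivInnerCLM_apply,
        realInnerCLM_apply, inner_neg_right, inner_neg_left, smul_eq_mul, inner_sub_left,
        inner_sub_right]
      rw [real_inner_comm (fderiv ℝ ψ u z) a, real_inner_comm (fderiv ℝ ψ u z) (ψ u)]
      ring
    rw [← hEq]; exact h3
  have hmemU : ∀ᶠ u in nhds u₀, u ∈ U := hU.mem_nhds hu₀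
  have hdiffU : ∀ᶠ u in nhds u₀, DifferentiableAt ℝ ψ u :=
    hmemU.mono fun u hu =>
      (hψ.differentiableOn (by simp)).differentiableAt (hU.mem_nhds hu)
  have hfd_ev : fderiv ℝ (fun u => (1 / 2 : ℝ) * ‖a - ψ u‖ ^ 2) =ᶠ[nhds u₀] G :=
    hdiffU.mono fun u hu => (key u hu).fderiv
  have h2nd : fderiv ℝ (fderiv ℝ (fun u => (1 / 2 : ℝ) * ‖a - ψ u‖ ^ 2)) u₀ =
      fderiv ℝ G u₀ := hfd_ev.fderiv_eq
  have hsub : HasFDerivAt (fun u => ψ u - a) (fderiv ℝ ψ u₀) u₀ :=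
    (hψc.differentiableAt (by simp)).hasFDerivAt.sub_const a
  have h_c : HasFDerivAt (fun u => realInnerCLM (ψ u - a))
      (realInnerCLM.comp (fderiv ℝ ψ u₀)) u₀ :=
    realInnerCLM.hasFDerivAt.comp u₀ hsub
  have hG : HasFDerivAt G
      ((compL ℝ (EuclideanSpace ℝ (Fin m)) (EuclideanSpace ℝ (Fin n)) ℝ
          (realInnerCLM (ψ u₀ - a))).comp (fderiv ℝ (fderiv ℝ ψ) u₀)
        + ((compL ℝ (EuclideanSpace ℝ (Fin m)) (EuclideanSpace ℝ (Fin n)) ℝ).flip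
            (fderiv ℝ ψ u₀)).comp (realInnerCLM.comp (fderiv ℝ ψ u₀))) u₀ :=
    h_c.clm_comp hD
  rw [h2nd, hG.fderiv]
  simp only [ContinuousLinearMap.add_apply, ContinuousLinearMap.comp_apply, compL_apply,
    ContinuousLinearMap.flip_apply, realInnerCLM_apply]
  ring

/-- Density argument in Lemma 4.2: along a normal ray, the Hessian of the distance function
is `DψᵀDψ − αW` and it is singular for at most `m` values of `α`. -/
theorem stmt_9 {m n : ℕ}
    (U : Set (EuclideanSpace ℝ (Fin m))) (hU : IsOpen U)
    (ψ : EuclideanSpace ℝ (Fin m) → EuclideanSpace ℝ (Fin n))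
    (hψ : ContDiffOn ℝ (⊤ : ℕ∞) ψ U)
    (u₀ : EuclideanSpace ℝ (Fin m)) (hu₀ : u₀ ∈ U)
    (hinj : Function.Injective (fderiv ℝ ψ u₀))
    (η : EuclideanSpace ℝ (Fin n))
    (hη : ContinuousLinearMap.adjoint (fderiv ℝ ψ u₀) η = 0)
    (W : EuclideanSpace ℝ (Fin m) →L[ℝ] EuclideanSpace ℝ (Fin m))
    (hW : ∀ v w, ⟪W v, w⟫ = ⟪η, fderiv ℝ (fderiv ℝ ψ) u₀ v w⟫)
    (H : ℝ → (EuclideanSpace ℝ (Fin m) →L[ℝ] EuclideanSpace ℝ (Fin m)))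
    (hHα : ∀ (α : ℝ) (v w), ⟪H α v, w⟫ =
      fderiv ℝ (fderiv ℝ (fun u => (1 / 2 : ℝ) * ‖(ψ u₀ + α • η) - ψ u‖ ^ 2)) u₀ v w) :
    (∀ α : ℝ, H α =
      (ContinuousLinearMap.adjoint (fderiv ℝ ψ u₀)).comp (fderiv ℝ ψ u₀) - α • W) ∧
    {α : ℝ | ¬ IsUnit (H α)}.Finite ∧ {α : ℝ | ¬ IsUnit (H α)}.ncard ≤ m := by
  set D₀ := fderiv ℝ ψ u₀ with hD₀
  set A := (ContinuousLinearMap.adjoint D₀).comp D₀ with hA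
  have hH : ∀ α : ℝ, H α = A - α • W := by
    intro α
    refine ContinuousLinearMap.ext fun v => ?_
    refine ext_inner_right ℝ fun w => ?_
    rw [hHα α v w, hessian_dist_formula U hU ψ hψ u₀ hu₀ (ψ u₀ + α • η) v w]
    have h1 : ψ u₀ - (ψ u₀ + α • η) = -(α • η) := by abel
    rw [h1, inner_neg_left, real_inner_smul_left, ← hW v w,
      ← ContinuousLinearMap.adjoint_inner_left D₀ w (D₀ v), hA]
    simp only [ContinuousLinearMap.sub_apply, ContinuousLinearMap.smul_apply,
      inner_sub_left, real_inner_smul_left, ContinuousLinearMap.comp_apply]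
    ring
  refine ⟨hH, ?_⟩
  have hAinj : Function.Injective A := by
    intro x y hxy
    have h0 : A (x - y) = 0 := by rw [map_sub, hxy, sub_self]
    have h1 : ⟪D₀ (x - y), D₀ (x - y)⟫ = 0 := by
      rw [← ContinuousLinearMap.adjoint_inner_left D₀ (x - y) (D₀ (x - y))]
      rw [show (ContinuousLinearMap.adjoint D₀) (D₀ (x - y)) = A (x - y) from rfl, h0,
        inner_zero_left]
    have hD0 : D₀ (x - y) = 0 := inner_self_eq_zero.mp h1
    have h2 : x - y = 0 := hinj (by rw [hD0, map_zero])
    exact sub_eq_zero.mp h2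
  set b := (EuclideanSpace.basisFun (Fin m) ℝ).toBasis with hb
  set MA := LinearMap.toMatrix b b (A : EuclideanSpace ℝ (Fin m) →ₗ[ℝ] EuclideanSpace ℝ (Fin m))
    with hMA
  set MW := LinearMap.toMatrix b b (W : EuclideanSpace ℝ (Fin m) →ₗ[ℝ] EuclideanSpace ℝ (Fin m))
    with hMW
  set p : ℝ[X] := Matrix.det ((X : ℝ[X]) • (-MW).map C + MA.map C) with hp_def
  have h_eval : ∀ α : ℝ, p.eval α = LinearMap.det
      ((H α : EuclideanSpace ℝ (Fin m) →ₗ[ℝ] EuclideanSpace ℝ (Fin m))) := by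
    intro α
    have hmap : (((X : ℝ[X]) • (-MW).map C + MA.map C).map (eval α)) = MA - α • MW := by
      ext i j
      simp only [Matrix.map_apply, Matrix.add_apply, Matrix.smul_apply, Matrix.sub_apply,
        Matrix.neg_apply, eval_add, eval_mul, eval_C, eval_X, smul_eq_mul, eval_smul]
      ring
    have hdet2 := RingHom.map_det (evalRingHom α) ((X : ℝ[X]) • (-MW).map C + MA.map C)
    simp only [RingHom.mapMatrix_apply, coe_evalRingHom] at hdet2
    rw [hp_def, hdet2, hmap, hH α]
    rw [← LinearMap.det_toMatrix b]
    congr 1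
  have hAbij : Function.Bijective
      ((A : EuclideanSpace ℝ (Fin m) →ₗ[ℝ] EuclideanSpace ℝ (Fin m))) :=
    ⟨hAinj, LinearMap.injective_iff_surjective.mp hAinj⟩
  have hdetA : LinearMap.det
      ((A : EuclideanSpace ℝ (Fin m) →ₗ[ℝ] EuclideanSpace ℝ (Fin m))) ≠ 0 := by
    set e := LinearEquiv.ofBijective
      (A : EuclideanSpace ℝ (Fin m) →ₗ[ℝ] EuclideanSpace ℝ (Fin m)) hAbij with he
    have hu : IsUnit (LinearMap.det
        ((e : EuclideanSpace ℝ (Fin m) →ₗ[ℝ] EuclideanSpace ℝ (Fin m)))) := e.isUnit_det'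
    have hcoe : (e : EuclideanSpace ℝ (Fin m) →ₗ[ℝ] EuclideanSpace ℝ (Fin m)) =
        (A : EuclideanSpace ℝ (Fin m) →ₗ[ℝ] EuclideanSpace ℝ (Fin m)) := by
      refine LinearMap.ext fun x => ?_
      rw [he]
      exact LinearEquiv.ofBijective_apply _ x
    rw [hcoe] at hu
    exact hu.ne_zero
  have hp0 : p.eval 0 ≠ 0 := by
    rw [h_eval 0, hH 0]
    simpa using hdetA
  have hpne : p ≠ 0 := fun h => hp0 (by simp [h])
  have hsubset : {α : ℝ | ¬ IsUnit (H α)} ⊆ ↑p.roots.toFinset := by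
    intro α hα
    simp only [Finset.mem_coe, Multiset.mem_toFinset, Polynomial.mem_roots hpne, IsRoot]
    by_contra hroot
    apply hα
    have hdet : LinearMap.det
        ((H α : EuclideanSpace ℝ (Fin m) →ₗ[ℝ] EuclideanSpace ℝ (Fin m))) ≠ 0 := by
      rw [← h_eval]; exact hroot
    obtain ⟨eL, heL⟩ : ∃ eL : EuclideanSpace ℝ (Fin m) ≃ₗ[ℝ] EuclideanSpace ℝ (Fin m),
        (eL : EuclideanSpace ℝ (Fin m) →ₗ[ℝ] EuclideanSpace ℝ (Fin m)) =
          ((H α : EuclideanSpace ℝ (Fin m) →ₗ[ℝ] EuclideanSpace ℝ (Fin m))) :=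
      ⟨LinearMap.equivOfDetNeZero _ hdet, LinearEquiv.coe_ofIsUnitDet _⟩
    refine ⟨eL.toContinuousLinearEquiv.toUnit, ContinuousLinearMap.ext fun v => ?_⟩
    show eL v = H α v
    exact DFunLike.congr_fun heL v
  have hfin : ({α : ℝ | ¬ IsUnit (H α)}).Finite :=
    (p.roots.toFinset.finite_toSet).subset hsubset
  refine ⟨hfin, ?_⟩
  calc {α : ℝ | ¬ IsUnit (H α)}.ncard ≤ (↑p.roots.toFinset : Set ℝ).ncard :=
        Set.ncard_le_ncard hsubset (p.roots.toFinset.finite_toSet)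
    _ = p.roots.toFinset.card := Set.ncard_coe_finset _
    _ ≤ Multiset.card p.roots := p.roots.toFinset_card_le
    _ ≤ p.natDegree := p.card_roots'
    _ ≤ m := by
        rw [hp_def]
        simpa using natDegree_det_X_add_C_le (-MW) MA
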